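/- arXiv:2302.02458 — 6 statements merged into one kernel-verified Lean document; each statement's English description precedes it below -/
import Mathlib

section
/- For all x with 0 < x ≤ π/2, it holds that 1/sin(x) ≤ (1 + (π/2 − 1)(2x/π)²)/x. -/
open Real

/-- Degree-5 polynomial lower bound for `sin` on `[0, 5/4]`. -/
lemma sin_lb_aux (x : ℝ) (hx0 : 0 ≤ x) (hx : x ≤ 5/4) :
    x - x^3/6 - 5*x^4/768 + x^5/192 ≤ Real.sin x := by
  have h2 : Real.sin x = 2 * Real.sin (x/2) * Real.cos (x/2) := by
    rw [← Real.sin_two_mul]; ring_nf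
  have hb : |x/2| ≤ 1 := by rw [abs_of_nonneg (by linarith)]; linarith
  have hs := Real.sin_bound hb
  rw [abs_of_nonneg (by linarith : (0:ℝ) ≤ x/2)] at hs
  have h1 : x/2 - (x/2)^3/6 - (x/2)^4 * (5/96) ≤ Real.sin (x/2) := by
    have := abs_le.1 hs
    nlinarith [this.1, pow_nonneg (by linarith : (0:ℝ) ≤ x/2) 4]
  have hcos : 1 - (x/2)^2/2 ≤ Real.cos (x/2) := Real.one_sub_sq_div_two_le_cos
  have ha0 : (0:ℝ) ≤ x/2 - (x/2)^3/6 - (x/2)^4 * (5/96) := by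
    nlinarith [mul_nonneg (mul_nonneg hx0 hx0) (sub_nonneg.2 hx),
      mul_nonneg (mul_nonneg (mul_nonneg hx0 hx0) hx0) (sub_nonneg.2 hx),
      mul_nonneg hx0 (sub_nonneg.2 hx), sq_nonneg x]
  have hb0 : (0:ℝ) ≤ 1 - (x/2)^2/2 := by nlinarith
  have hsin0 : 0 ≤ Real.sin (x/2) := le_trans ha0 h1
  have key : (x/2 - (x/2)^3/6 - (x/2)^4 * (5/96)) * (1 - (x/2)^2/2)
      ≤ Real.sin (x/2) * Real.cos (x/2) := mul_le_mul h1 hcos hb0 hsin0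
  nlinarith [key, sq_nonneg (x^3), sq_nonneg x]

/-- Case `x ≤ 5/4` of the main theorem, in cleared-denominator form. -/
lemma small_case_aux (x p S : ℝ) (hp1 : (3.141592:ℝ) < p) (hp2 : p < 3.141593)
    (hx0 : 0 < x) (hx1 : x ≤ 5/4)
    (hL : x - x^3/6 - 5*x^4/768 + x^5/192 ≤ S) :
    x * p^2 ≤ (p^2 + (2*p - 4) * x^2) * S := by
  obtain ⟨L, hLdef⟩ : ∃ L : ℝ, L = x - x^3/6 - 5*x^4/768 + x^5/192 := ⟨_, rfl⟩
  rw [← hLdef] at hL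
  have hx0' := hx0.le
  have hL0 : 0 ≤ L := by
    rw [hLdef]
    nlinarith [mul_nonneg (mul_nonneg hx0' hx0') (sub_nonneg.2 hx1),
      mul_nonneg (mul_nonneg (mul_nonneg hx0' hx0') hx0') (sub_nonneg.2 hx1),
      mul_nonneg (mul_nonneg (mul_nonneg (mul_nonneg hx0' hx0') hx0') hx0') (sub_nonneg.2 hx1),
      mul_nonneg hx0' (sub_nonneg.2 hx1), sq_nonneg x]
  have hc : 2313/10000 * p^2 ≤ 2*p - 4 := by nlinarith
  have hkey : x - L ≤ 2313/10000 * x^2 * L := by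
    rw [hLdef]
    nlinarith [mul_nonneg (mul_nonneg (mul_nonneg hx0' hx0') hx0') (sub_nonneg.2 hx1),
      mul_nonneg (mul_nonneg (mul_nonneg (mul_nonneg hx0' hx0') hx0') hx0') (sub_nonneg.2 hx1),
      mul_nonneg (mul_nonneg (mul_nonneg (mul_nonneg (mul_nonneg hx0' hx0') hx0') hx0') hx0') (sub_nonneg.2 hx1),
      mul_nonneg (mul_nonneg (mul_nonneg hx0' hx0') hx0') (mul_nonneg (sub_nonneg.2 hx1) (sub_nonneg.2 hx1)),
      mul_nonneg (mul_nonneg (mul_nonneg (mul_nonneg hx0' hx0') hx0') hx0') (mul_nonneg (sub_nonneg.2 hx1) (sub_nonneg.2 hx1)),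
      sq_nonneg x, mul_nonneg (mul_nonneg hx0' hx0') hx0']
  have h1 : (p^2 + (2*p - 4) * x^2) * L ≤ (p^2 + (2*p - 4) * x^2) * S := by
    apply mul_le_mul_of_nonneg_left hL
    nlinarith
  have h2 : p^2 * (x - L) ≤ p^2 * (2313/10000 * x^2 * L) :=
    mul_le_mul_of_nonneg_left hkey (sq_nonneg p)
  have h3 : 2313/10000 * p^2 * (x^2 * L) ≤ (2*p - 4) * (x^2 * L) :=
    mul_le_mul_of_nonneg_right hc (mul_nonneg (sq_nonneg x) hL0)
  nlinarith [h1, h2, h3]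

/-- Polynomial inequality for the case `x` close to `π/2`, written with `s = π/2 - x`. -/
lemma big_case_aux (s p : ℝ) (hp1 : (3.141592:ℝ) < p) (hp2 : p < 3.141593)
    (hs0 : 0 ≤ s) (hs1 : s ≤ 33/100) :
    (p/2 - s) * p^2 ≤ (p^2 + (2*p - 4) * (p/2 - s)^2) * (1 - s^2/2) := by
  have hcube : 0 ≤ (p - 3)^2 * (p + 6) := mul_nonneg (sq_nonneg _) (by linarith)
  have hq : (0:ℝ) ≤ p^3/4 + 4 - 2*p := by nlinarith
  have hs4 : s^4 ≤ (33/100)^3 * s := by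
    nlinarith [mul_nonneg (mul_nonneg hs0 hs0) (sub_nonneg.2 hs1),
      mul_nonneg (mul_nonneg hs0 (sub_nonneg.2 hs1)) (sub_nonneg.2 hs1),
      mul_nonneg hs0 (sub_nonneg.2 hs1)]
  have t1 : 0 ≤ (33/100*s - s^2) * (p^3/4 + 4 - 2*p) :=
    mul_nonneg (by nlinarith) hq
  have t2 : 0 ≤ s^3 * (p^2 - 2*p) :=
    mul_nonneg (by positivity) (by nlinarith)
  have t3 : 0 ≤ ((33/100)^3*s - s^4) * (p - 2) :=
    mul_nonneg (by linarith) (by linarith)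
  have t4 : 0 ≤ s * (4*p - p^2 + 33/100*(2*p - 4 - p^3/4) - (33/100)^3*(p - 2)) :=
    mul_nonneg hs0 (by nlinarith)
  nlinarith [t1, t2, t3, t4]

/-- For `0 < x ≤ π/2`, `1/sin(x) ≤ (1 + (π/2 − 1)(2x/π)²)/x`. -/
theorem one_div_sin_bound (x : ℝ) (hx0 : 0 < x) (hx : x ≤ Real.pi / 2) :
    1 / Real.sin x ≤ (1 + (Real.pi / 2 - 1) * (2 * x / Real.pi) ^ 2) / x := by
  have hpi1 : (3.141592 : ℝ) < π := Real.pi_gt_d6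
  have hpi2 : π < 3.141593 := Real.pi_lt_d6
  have hpipos : (0:ℝ) < π := by linarith
  have hsin : 0 < Real.sin x :=
    Real.sin_pos_of_pos_of_lt_pi hx0 (by linarith)
  rw [div_le_div_iff₀ hsin hx0]
  have hqe : 1 + (π/2 - 1) * (2 * x / π) ^ 2 = (π^2 + (2*π - 4) * x^2) / π^2 := by
    field_simp; ring
  rw [hqe, div_mul_eq_mul_div, le_div_iff₀ (by positivity), one_mul]
  -- goal : x * π^2 ≤ (π^2 + (2*π-4)*x^2) * sin x
  by_cases hx1 : x ≤ 5/4
  · exact small_case_aux x π (Real.sin x) hpi1 hpi2 hx0 hx1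
      (sin_lb_aux x hx0.le hx1)
  · push_neg at hx1
    have hcos : 1 - (π/2 - x)^2/2 ≤ Real.sin x := by
      have := Real.one_sub_sq_div_two_le_cos (x := π/2 - x)
      rwa [Real.cos_pi_div_two_sub] at this
    have hpos : (0:ℝ) ≤ π^2 + (2*π - 4) * x^2 := by nlinarith
    have h1 : (π^2 + (2*π - 4) * x^2) * (1 - (π/2 - x)^2/2)
        ≤ (π^2 + (2*π - 4) * x^2) * Real.sin x :=
      mul_le_mul_of_nonneg_left hcos hpos
    have h2 := big_case_aux (π/2 - x) π hpi1 hpi2 (by linarith) (by linarith)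
    have hxx : π/2 - (π/2 - x) = x := by ring
    rw [hxx] at h2
    linarith
end

section
/- For a positive integer n and integers 1 ≤ r, s ≤ n, define ζ_{r,s} = −(2/(n+1)) ∑_{k=1}^{n} [sin(krπ/(n+1)) sin(ksπ/(n+1))] / [2(1 − cos(kπ/(n+1)))]. Then ζ_{r,s} = −((n+1) min(r,s) − r s)/(n+1). -/
open Real Finset

/-- Partial Dirichlet-type sum. -/
noncomputable def Dk (m : ℕ) (φ : ℝ) : ℝ := ∑ j ∈ range m, Real.cos (j * φ)

/-- Fejér-type kernel. -/
noncomputable def G (m : ℕ) (φ : ℝ) : ℝ :=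
  2 * ∑ j ∈ range m, ((m : ℝ) - j) * Real.cos (j * φ) - m

lemma dirichlet (φ : ℝ) (m : ℕ) :
    (1 - Real.cos φ) * (2 * Dk (m+1) φ - 1)
      = Real.cos (m*φ) - Real.cos (((m:ℝ)+1)*φ) := by
  induction m with
  | zero => simp [Dk]; ring
  | succ m ih =>
      have h1 : Dk (m+2) φ = Dk (m+1) φ + Real.cos (((m:ℝ)+1)*φ) := by
        simp only [Dk, Finset.sum_range_succ]
        push_cast
        ring
      have h2 : Real.cos (((m:ℝ)+2)*φ) + Real.cos ((m:ℝ)*φ)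
          = 2 * Real.cos (((m:ℝ)+1)*φ) * Real.cos φ := by
        rw [show ((m:ℝ)+2)*φ = ((m:ℝ)+1)*φ + φ by ring,
            show (m:ℝ)*φ = ((m:ℝ)+1)*φ - φ by ring,
            Real.cos_add, Real.cos_sub]
        ring
      push_cast
      rw [h1, show ((m:ℝ)+1+1)*φ = ((m:ℝ)+2)*φ by ring]
      linear_combination ih + h2

lemma G_succ (m : ℕ) (φ : ℝ) : G (m+1) φ = G m φ + (2 * Dk (m+1) φ - 1) := by
  simp only [G, Dk]
  have h : ∀ j : ℕ, ((((m+1):ℕ):ℝ) - j) * Real.cos (j*φ)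
      = ((m:ℝ) - j) * Real.cos (j*φ) + Real.cos (j*φ) := by
    intro j; push_cast; ring
  rw [Finset.sum_congr rfl fun j _ => h j, Finset.sum_add_distrib,
      Finset.sum_range_succ (f := fun j : ℕ => ((m:ℝ) - j) * Real.cos (j*φ))]
  push_cast
  ring

lemma fejer (φ : ℝ) (m : ℕ) : (1 - Real.cos φ) * G m φ = 1 - Real.cos (m*φ) := by
  induction m with
  | zero => simp [G]
  | succ m ih =>
      rw [G_succ]
      have hd := dirichlet φ m
      push_cast
      linear_combination ih + hd

lemma per_term (r s : ℕ) (φ : ℝ) (hφ : Real.cos φ ≠ 1) (hsr : s ≤ r) :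
    Real.sin (r*φ) * Real.sin (s*φ) / (2*(1 - Real.cos φ))
      = (G (r+s) φ - G (r-s) φ) / 4 := by
  have h1 : (1 - Real.cos φ) ≠ 0 := sub_ne_zero.mpr (Ne.symm hφ)
  have hf1 := fejer φ (r+s)
  have hf2 := fejer φ (r-s)
  have hc : ((r-s : ℕ) : ℝ) = (r:ℝ) - s := by
    exact_mod_cast Nat.cast_sub (R := ℝ) hsr
  rw [hc] at hf2
  push_cast at hf1
  have hprod : 2 * (Real.sin ((r:ℝ)*φ) * Real.sin ((s:ℝ)*φ))
      = Real.cos (((r:ℝ) - s)*φ) - Real.cos (((r:ℝ)+s)*φ) := by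
    rw [show ((r:ℝ) - s)*φ = (r:ℝ)*φ - (s:ℝ)*φ by ring,
        show ((r:ℝ) + s)*φ = (r:ℝ)*φ + (s:ℝ)*φ by ring,
        Real.cos_sub, Real.cos_add]
    ring
  field_simp
  linear_combination (norm := ring_nf) (-2)*hf1 + 2*hf2 + 2*hprod

/-- The value of `∑ k ∈ Icc 1 n, cos (j k π/(n+1))`. -/
noncomputable def cc (n : ℕ) (j : ℕ) : ℝ :=
  if j = 0 then (n:ℝ) else if Even j then -1 else 0

lemma cos_sum (n : ℕ) (j : ℕ) (hj : j < 2*(n+1)) :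
    ∑ k ∈ Icc 1 n, Real.cos ((j:ℝ) * ((k:ℝ)*π/((n:ℝ)+1))) = cc n j := by
  rcases eq_or_ne j 0 with rfl | hj0
  · simp [cc, Nat.card_Icc]
  have hj1 : 1 ≤ j := Nat.one_le_iff_ne_zero.mpr hj0
  set x : ℝ := (j:ℝ)*π/((n:ℝ)+1) with hx
  have hn1 : (0:ℝ) < (n:ℝ)+1 := by positivity
  have hhalf_pos : 0 < x/2 := by
    rw [hx]
    have : (0:ℝ) < (j:ℝ)*π := by positivity
    positivity
  have hhalf_lt : x/2 < π := by
    rw [hx]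
    rw [div_div, div_lt_iff₀ (by positivity)]
    have hj' : (j:ℝ) < 2*((n:ℝ)+1) := by exact_mod_cast hj
    nlinarith [Real.pi_pos]
  have hs : Real.sin (x/2) ≠ 0 := ne_of_gt (Real.sin_pos_of_pos_of_lt_pi hhalf_pos hhalf_lt)
  have key : (2*Real.sin (x/2)) * ∑ k ∈ Icc 1 n, Real.cos ((j:ℝ) * ((k:ℝ)*π/((n:ℝ)+1)))
      = Real.sin ((n:ℝ)*x + x/2) - Real.sin (x/2) := by
    rw [Finset.mul_sum]
    rw [show Finset.Icc 1 n = Finset.Ico 1 (n+1) by rw [Finset.Ico_add_one_right_eq_Icc]]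
    rw [Finset.sum_Ico_eq_sum_range]
    simp only [Nat.add_sub_cancel]
    have hterm : ∀ i : ℕ, 2*Real.sin (x/2) * Real.cos ((j:ℝ) * (((1+i:ℕ):ℝ)*π/((n:ℝ)+1)))
        = Real.sin ((((i+1:ℕ)):ℝ)*x + x/2) - Real.sin (((i:ℕ):ℝ)*x + x/2) := by
      intro i
      have e0 : (j:ℝ) * (((1+i:ℕ):ℝ)*π/((n:ℝ)+1)) = ((i:ℝ)+1)*x := by
        rw [hx]; push_cast; ring
      have e1 : (((i+1:ℕ)):ℝ)*x + x/2 = ((i:ℝ)+1)*x + x/2 := by push_cast; ring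
      have e2 : ((i:ℕ):ℝ)*x + x/2 = ((i:ℝ)+1)*x - x/2 := by push_cast; ring
      rw [e0, e1, e2, Real.sin_add, Real.sin_sub]
      ring
    rw [Finset.sum_congr rfl fun i _ => hterm i]
    rw [Finset.sum_range_sub (fun i : ℕ => Real.sin (((i:ℕ):ℝ)*x + x/2))]
    norm_num
  have harg2 : (n:ℝ)*x + x/2 = (j:ℝ)*π - x/2 := by
    rw [hx]; field_simp; ring
  have hsin : Real.sin ((n:ℝ)*x + x/2) = -((-1)^j * Real.sin (x/2)) := by
    rw [harg2, Real.sin_nat_mul_pi_sub]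
  rcases Nat.even_or_odd j with he | ho
  · have hcc : cc n j = -1 := by simp [cc, hj0, he]
    rw [hcc]
    apply mul_left_cancel₀ (a := 2*Real.sin (x/2)) (by positivity)
    rw [key, hsin, he.neg_one_pow]
    ring
  · have hcc : cc n j = 0 := by simp [cc, hj0, Nat.not_even_iff_odd.mpr ho]
    rw [hcc]
    apply mul_left_cancel₀ (a := 2*Real.sin (x/2)) (by positivity)
    rw [key, hsin, ho.neg_one_pow]
    ring

lemma sum_G (n : ℕ) (m : ℕ) (hm : m ≤ 2*n+1) :
    ∑ k ∈ Icc 1 n, G m ((k:ℝ)*π/((n:ℝ)+1))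
      = 2 * (∑ j ∈ range m, ((m:ℝ) - j) * cc n j) - n*m := by
  simp only [G]
  rw [Finset.sum_sub_distrib, Finset.sum_const, Nat.card_Icc, ← Finset.mul_sum,
      Finset.sum_comm]
  have h : ∀ j ∈ range m, ∑ k ∈ Icc 1 n, ((m:ℝ) - j) * Real.cos ((j:ℝ) * ((k:ℝ)*π/((n:ℝ)+1)))
      = ((m:ℝ) - j) * cc n j := by
    intro j hj
    rw [← Finset.mul_sum, cos_sum n j (by simp at hj; omega)]
  rw [Finset.sum_congr rfl h]
  simp

def EE : ℕ → ℕ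
  | 0 => 0
  | (m+1) => EE m + m/2

lemma S1 (n : ℕ) (m : ℕ) :
    ∑ j ∈ range (m+1), cc n j = (n:ℝ) - (m/2 : ℕ) := by
  induction m with
  | zero => simp [cc]
  | succ m ih =>
      rw [Finset.sum_range_succ, ih]
      rcases Nat.even_or_odd (m+1) with h | h
      · have h2 : (m+1)/2 = m/2 + 1 := by obtain ⟨t, ht⟩ := h; omega
        rw [show cc n (m+1) = -1 by simp [cc, h], h2]
        push_cast
        ring
      · have h2 : (m+1)/2 = m/2 := by obtain ⟨t, ht⟩ := h; omega
        rw [show cc n (m+1) = 0 by simp [cc, Nat.not_even_iff_odd.mpr h], h2]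
        ring

lemma T_val (n : ℕ) (m : ℕ) :
    ∑ j ∈ range m, ((m:ℝ) - j) * cc n j = (n:ℝ)*m - EE m := by
  induction m with
  | zero => simp [EE]
  | succ m ih =>
      have h : ∀ j : ℕ, ((((m+1):ℕ):ℝ) - j) * cc n j
          = ((m:ℝ) - j) * cc n j + cc n j := by
        intro j; push_cast; ring
      rw [Finset.sum_congr rfl fun j _ => h j, Finset.sum_add_distrib,
          Finset.sum_range_succ (f := fun j : ℕ => ((m:ℝ) - j) * cc n j),
          ih, S1 n m, show EE (m+1) = EE m + m/2 from rfl]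
      push_cast
      ring

lemma E_diff (r s : ℕ) (hs1 : 1 ≤ s) (hsr : s ≤ r) :
    (EE (r+s) : ℝ) = EE (r-s) + r*s - s := by
  revert hsr
  induction s, hs1 using Nat.le_induction with
  | base =>
      intro hsr
      obtain ⟨u, rfl⟩ : ∃ u, r = u + 1 := ⟨r-1, by omega⟩
      have e1 : EE (u+1+1) = EE u + (u/2 + (u+1)/2) := by
        show EE (u+1) + (u+1)/2 = _
        show EE u + u/2 + (u+1)/2 = _
        omega
      have e2 : u/2 + (u+1)/2 = u := by omega
      rw [e1, e2, show (u+1) - 1 = u by omega]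
      push_cast
      ring
  | succ s hs ih =>
      intro hsr
      have h := ih (by omega)
      obtain ⟨v, hv⟩ : ∃ v, r - s = v + 1 := ⟨r-(s+1), by omega⟩
      have hv2 : r - (s+1) = v := by omega
      have e1 : (EE (r+(s+1)) : ℝ) = EE (r+s) + (((r+s)/2 : ℕ) : ℝ) := by
        rw [show EE (r+(s+1)) = EE (r+s) + (r+s)/2 from rfl]
        push_cast
        ring
      have e2 : (EE (r-s) : ℝ) = EE (r-(s+1)) + ((v/2 : ℕ) : ℝ) := by
        rw [hv, show EE (v+1) = EE v + v/2 from rfl, hv2]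
        push_cast
        ring
      have e3 : ((r+s)/2) + (v/2) + 1 = r := by omega
      have e3' : (((r+s)/2 : ℕ) : ℝ) + ((v/2 : ℕ) : ℝ) + 1 = r := by exact_mod_cast e3
      rw [e1, h, e2]
      push_cast
      linarith [e3']

lemma cos_ne_one (n k : ℕ) (h1 : 1 ≤ k) (h2 : k ≤ n) :
    Real.cos ((k:ℝ)*π/((n:ℝ)+1)) ≠ 1 := by
  have hπ := Real.pi_pos
  have hk0 : (0:ℝ) < (k:ℝ) := by exact_mod_cast h1
  have hkn : (k:ℝ) ≤ (n:ℝ) := by exact_mod_cast h2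
  intro h
  rw [Real.cos_eq_one_iff] at h
  obtain ⟨t, ht⟩ := h
  have hpos : 0 < (k:ℝ)*π/((n:ℝ)+1) := by positivity
  have hlt : (k:ℝ)*π/((n:ℝ)+1) < π := by
    rw [div_lt_iff₀ (by positivity)]
    nlinarith
  have ht0 : 0 < (t:ℝ) := by nlinarith
  have ht1 : (1:ℝ) ≤ (t:ℝ) := by
    have : (0:ℤ) < t := by exact_mod_cast ht0
    exact_mod_cast this
  nlinarith

lemma key (n r s : ℕ) (hn : 0 < n) (hs1 : 1 ≤ s) (hsr : s ≤ r) (hrn : r ≤ n) :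
    -(2 / ((n : ℝ) + 1)) * ∑ k ∈ Finset.Icc 1 n,
        Real.sin (k * r * Real.pi / (n + 1)) * Real.sin (k * s * Real.pi / (n + 1)) /
          (2 * (1 - Real.cos (k * Real.pi / (n + 1)))) =
      -(((n : ℝ) + 1) * (s : ℝ) - (r : ℝ) * s) / (n + 1) := by
  have hstep : ∀ k ∈ Finset.Icc 1 n,
      Real.sin (k * r * Real.pi / (n + 1)) * Real.sin (k * s * Real.pi / (n + 1)) /
          (2 * (1 - Real.cos (k * Real.pi / (n + 1))))
        = (G (r+s) ((k:ℝ)*π/((n:ℝ)+1)) - G (r-s) ((k:ℝ)*π/((n:ℝ)+1))) / 4 := by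
    intro k hk
    simp only [Finset.mem_Icc] at hk
    have hφ := cos_ne_one n k hk.1 hk.2
    rw [show (k:ℝ) * r * π / ((n:ℝ)+1) = (r:ℝ) * ((k:ℝ)*π/((n:ℝ)+1)) by ring,
        show (k:ℝ) * s * π / ((n:ℝ)+1) = (s:ℝ) * ((k:ℝ)*π/((n:ℝ)+1)) by ring]
    exact per_term r s _ hφ hsr
  rw [Finset.sum_congr rfl hstep, ← Finset.sum_div, Finset.sum_sub_distrib,
      sum_G n (r+s) (by omega), sum_G n (r-s) (by omega),
      T_val, T_val]
  have hE := E_diff r s hs1 hsr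
  have hrs : ((r-s:ℕ):ℝ) = (r:ℝ) - s := Nat.cast_sub hsr
  rw [hrs]
  have hne : ((n:ℝ)+1) ≠ 0 := by positivity
  push_cast
  field_simp
  linear_combination (4:ℝ)*hE

/-- Closed form of the harmonic-chain susceptibility:
`ζ_{r,s} = −(2/(n+1)) ∑_{k=1}^{n} sin(krπ/(n+1)) sin(ksπ/(n+1)) / (2(1 − cos(kπ/(n+1))))`
equals `−((n+1) min(r,s) − rs)/(n+1)` for `1 ≤ r, s ≤ n`. -/
theorem susceptibility_closed_form (n r s : ℕ) (hn : 0 < n)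
    (hr1 : 1 ≤ r) (hrn : r ≤ n) (hs1 : 1 ≤ s) (hsn : s ≤ n) :
    -(2 / ((n : ℝ) + 1)) * ∑ k ∈ Finset.Icc 1 n,
        Real.sin (k * r * Real.pi / (n + 1)) * Real.sin (k * s * Real.pi / (n + 1)) /
          (2 * (1 - Real.cos (k * Real.pi / (n + 1)))) =
      -(((n : ℝ) + 1) * (min r s : ℝ) - (r : ℝ) * s) / (n + 1) := by
  rcases le_total s r with h | h
  · rw [min_eq_right (show (s:ℝ) ≤ (r:ℝ) by exact_mod_cast h)]
    exact key n r s hn hs1 h hrn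
  · rw [min_eq_left (show (r:ℝ) ≤ (s:ℝ) by exact_mod_cast h)]
    rw [show (∑ k ∈ Finset.Icc 1 n,
        Real.sin (k * r * Real.pi / (n + 1)) * Real.sin (k * s * Real.pi / (n + 1)) /
          (2 * (1 - Real.cos (k * Real.pi / (n + 1)))))
      = ∑ k ∈ Finset.Icc 1 n,
        Real.sin (k * s * Real.pi / (n + 1)) * Real.sin (k * r * Real.pi / (n + 1)) /
          (2 * (1 - Real.cos (k * Real.pi / (n + 1))))
      from Finset.sum_congr rfl fun k _ => by ring]
    rw [key n s r hn hr1 h hsn]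
    ring
end

section
/- For every positive integer n and real J with 0 ≤ J ≤ 1, F⁻¹ := exp( (J²/(4(n+1))) ∑_{k=1}^{n} cos²(kπ/(2(n+1)))/sin(kπ/(2(n+1))) ) satisfies n^{J²/(2π)} e^{−J²/6} ≤ F⁻¹ ≤ n^{J²/4} e^{J²/8}. -/
set_option maxHeartbeats 1000000

open Real Finset

lemma log_step_aux (m : ℕ) (hm : 1 ≤ m) :
    (1:ℝ)/(m+1) ≤ Real.log (m+1) - Real.log m := by
  have hm0 : (0:ℝ) < m := by exact_mod_cast hm
  have h := Real.log_le_sub_one_of_pos (x := (m:ℝ)/(m+1)) (by positivity)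
  rw [Real.log_div (by positivity) (by positivity)] at h
  have he : (m:ℝ)/(m+1) - 1 = -(1/(m+1)) := by field_simp; ring
  rw [he] at h
  linarith

lemma log_step_aux2 (m : ℕ) (hm : 1 ≤ m) :
    Real.log (m+1) - Real.log m ≤ (1:ℝ)/m := by
  have hm0 : (0:ℝ) < m := by exact_mod_cast hm
  have h := Real.log_le_sub_one_of_pos (x := ((m:ℝ)+1)/m) (by positivity)
  rw [Real.log_div (by positivity) (by positivity)] at h
  have he : ((m:ℝ)+1)/m - 1 = 1/m := by field_simp; ring
  rw [he] at h
  linarith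

lemma harm_ge_log (n : ℕ) (hn : 1 ≤ n) :
    Real.log n ≤ ∑ k ∈ Finset.Icc 1 n, (1 : ℝ) / k := by
  have key : ∀ m : ℕ, 1 ≤ m → Real.log (m+1) ≤ ∑ k ∈ Finset.Icc 1 m, (1 : ℝ) / k := by
    intro m hm
    induction m with
    | zero => omega
    | succ p ih =>
      rcases Nat.lt_or_ge p 1 with h | h
      · interval_cases p
        simp
        have := Real.log_le_sub_one_of_pos (x := (2:ℝ)) (by norm_num)
        norm_num at this ⊢
        linarith
      · have hstep := log_step_aux2 (p+1) (by omega)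
        rw [Finset.sum_Icc_succ_top (by omega)]
        have := ih h
        push_cast
        push_cast at this hstep
        linarith
  have h1 := key n hn
  have h2 : Real.log n ≤ Real.log (n+1) := by
    apply Real.log_le_log (by exact_mod_cast hn) (by linarith)
  linarith

lemma harm_le_log (n : ℕ) (hn : 2 ≤ n) :
    ∑ k ∈ Finset.Icc 1 n, (1 : ℝ) / k ≤ Real.log n + 3/2 - Real.log 2 := by
  induction n with
  | zero => omega
  | succ m ih =>
    rcases Nat.lt_or_ge m 2 with h | h
    · have hm : m = 1 := by omega
      subst hm
      rw [show Finset.Icc 1 2 = {1, 2} from rfl]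
      norm_num
    · have hstep := log_step_aux m (by omega)
      rw [Finset.sum_Icc_succ_top (by omega)]
      have := ih h
      push_cast
      push_cast at this hstep
      linarith

lemma telescope_aux (g : ℕ → ℝ) (n : ℕ) (hn : 1 ≤ n) :
    ∑ k ∈ Finset.Icc 1 n, (g k - g (k+1)) = g 1 - g (n+1) := by
  induction n with
  | zero => omega
  | succ m ih =>
    rcases Nat.lt_or_ge m 1 with h | h
    · interval_cases m
      simp
    · rw [Finset.sum_Icc_succ_top (by omega), ih h]
      ring

lemma gauss_aux (n : ℕ) : ∑ k ∈ Finset.Icc 1 n, (k:ℝ) = n*(n+1)/2 := by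
  induction n with
  | zero => simp
  | succ m ih =>
    rw [Finset.sum_Icc_succ_top (by omega), ih]
    push_cast
    ring

/-- Bounds on the inverse overlap of the transmission-line gadget. -/
theorem inverse_overlap_bounds (n : ℕ) (hn : 2 ≤ n) (J : ℝ) (hJ0 : 0 ≤ J) (hJ1 : J ≤ 1) :
    (n : ℝ) ^ (J ^ 2 / (2 * Real.pi)) * Real.exp (-J ^ 2 / 6) ≤
      Real.exp ((J ^ 2 / (4 * ((n : ℝ) + 1))) * ∑ k ∈ Finset.Icc 1 n,
        Real.cos (k * Real.pi / (2 * (n + 1))) ^ 2 / Real.sin (k * Real.pi / (2 * (n + 1)))) ∧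
    Real.exp ((J ^ 2 / (4 * ((n : ℝ) + 1))) * ∑ k ∈ Finset.Icc 1 n,
        Real.cos (k * Real.pi / (2 * (n + 1))) ^ 2 / Real.sin (k * Real.pi / (2 * (n + 1)))) ≤
      (n : ℝ) ^ (J ^ 2 / 4) * Real.exp (J ^ 2 / 8) := by
  have hn2 : (2:ℝ) ≤ (n:ℝ) := by exact_mod_cast hn
  have hπ := Real.pi_pos
  have hπ1 : (3.141592:ℝ) < π := Real.pi_gt_d6
  have hπ2 : π < 3.15 := Real.pi_lt_d2
  set N : ℝ := (n:ℝ) + 1 with hNdef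
  have hN3 : (3:ℝ) ≤ N := by simp only [hNdef]; linarith
  have hN0 : (0:ℝ) < N := by linarith
  set θ : ℕ → ℝ := fun k => k * π / (2 * N) with hθdef
  set S := ∑ k ∈ Finset.Icc 1 n,
      Real.cos (k * π / (2 * N)) ^ 2 / Real.sin (k * π / (2 * N)) with hSdef
  set H := ∑ k ∈ Finset.Icc 1 n, (1:ℝ)/k with hHdef
  -- basic facts about θ k for k in range
  have hθpos : ∀ k ∈ Finset.Icc 1 n, 0 < θ k := by
    intro k hk
    obtain ⟨hk1, _⟩ := Finset.mem_Icc.mp hk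
    have : (1:ℝ) ≤ k := by exact_mod_cast hk1
    simp only [hθdef]
    positivity
  have hθlt : ∀ k ∈ Finset.Icc 1 n, θ k < π/2 := by
    intro k hk
    obtain ⟨_, hk2⟩ := Finset.mem_Icc.mp hk
    have hkn : (k:ℝ) ≤ (n:ℝ) := by exact_mod_cast hk2
    simp only [hθdef]
    rw [div_lt_iff₀ (by positivity)]
    have : (k:ℝ) < N := by simp only [hNdef]; linarith
    nlinarith
  have hsinpos : ∀ k ∈ Finset.Icc 1 n, 0 < Real.sin (θ k) := by
    intro k hk
    exact Real.sin_pos_of_pos_of_lt_pi (hθpos k hk) (by nlinarith [hθlt k hk])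
  -- split: cos²/sin = 1/sin − sin
  have hSsplit : S = ∑ k ∈ Finset.Icc 1 n, (1 / Real.sin (θ k) - Real.sin (θ k)) := by
    apply Finset.sum_congr rfl
    intro k hk
    have hs := hsinpos k hk
    have hc : Real.cos (θ k) ^ 2 = 1 - Real.sin (θ k) ^ 2 := Real.cos_sq' (θ k)
    simp only [hθdef] at hc hs ⊢
    rw [hc]
    field_simp
  -- Jordan lower bound on sin
  have hjordan : ∀ k ∈ Finset.Icc 1 n, (k:ℝ)/N ≤ Real.sin (θ k) := by
    intro k hk
    have h := Real.mul_le_sin (hθpos k hk).le (hθlt k hk).le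
    have heq : 2/π * θ k = (k:ℝ)/N := by
      simp only [hθdef]; field_simp
    rwa [heq] at h
  -- upper bound on S
  have hub : S ≤ N * H - (n:ℝ)/2 := by
    have h1 : S ≤ ∑ k ∈ Finset.Icc 1 n, (N/(k:ℝ) - (k:ℝ)/N) := by
      rw [hSsplit]
      apply Finset.sum_le_sum
      intro k hk
      obtain ⟨hk1, _⟩ := Finset.mem_Icc.mp hk
      have hk1' : (1:ℝ) ≤ k := by exact_mod_cast hk1
      have hs := hsinpos k hk
      have hj := hjordan k hk
      have h2 : 1 / Real.sin (θ k) ≤ N/(k:ℝ) := by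
        have := one_div_le_one_div_of_le (by positivity : (0:ℝ) < (k:ℝ)/N) hj
        rwa [one_div_div] at this
      linarith
    have h2 : ∑ k ∈ Finset.Icc 1 n, (N/(k:ℝ) - (k:ℝ)/N) = N * H - (n:ℝ)/2 := by
      rw [Finset.sum_sub_distrib]
      congr 1
      · rw [hHdef, Finset.mul_sum]
        apply Finset.sum_congr rfl
        intro k hk
        rw [mul_one_div]
      · rw [← Finset.sum_div, gauss_aux]
        simp only [hNdef]
        rw [div_eq_div_iff (by positivity) (by norm_num)]
        ring
    linarith [h1, h2.le, h2.ge]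
  -- lower bound pieces
  have hlow1 : ∀ k ∈ Finset.Icc 1 n, 2*N/(π*(k:ℝ)) ≤ 1 / Real.sin (θ k) := by
    intro k hk
    have hs := hsinpos k hk
    have hle : Real.sin (θ k) ≤ θ k := Real.sin_le (hθpos k hk).le
    have h := one_div_le_one_div_of_le hs hle
    have heq : 1 / θ k = 2*N/(π*(k:ℝ)) := by
      obtain ⟨hk1, _⟩ := Finset.mem_Icc.mp hk
      have hk1' : (1:ℝ) ≤ k := by exact_mod_cast hk1
      simp only [hθdef]
      rw [one_div_div]
      ring
    rwa [heq] at h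
  -- telescoping bound on the sum of sines
  set T := ∑ k ∈ Finset.Icc 1 n, Real.sin (θ k) with hTdef
  have hTnonneg : 0 ≤ T := Finset.sum_nonneg fun k hk => (hsinpos k hk).le
  have hs4 : 0 < Real.sin (π/(4*N)) := by
    apply Real.sin_pos_of_pos_of_lt_pi (by positivity)
    rw [div_lt_iff₀ (by positivity : (0:ℝ) < 4*N)]
    nlinarith
  have htel : 2 * Real.sin (π/(4*N)) * T ≤ 1 := by
    have hstep : ∀ k ∈ Finset.Icc 1 n,
        2 * Real.sin (π/(4*N)) * Real.sin (θ k) ≤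
          Real.cos (θ k) - Real.cos (θ (k+1)) := by
      intro k hk
      obtain ⟨hk1, hk2⟩ := Finset.mem_Icc.mp hk
      have hk1' : (1:ℝ) ≤ k := by exact_mod_cast hk1
      have hkn : (k:ℝ) ≤ (n:ℝ) := by exact_mod_cast hk2
      have hcc := Real.cos_sub_cos (θ k) (θ (k+1))
      have he1 : (θ k + θ (k+1))/2 = θ k + π/(4*N) := by
        simp only [hθdef]; push_cast; field_simp; ring
      have he2 : (θ k - θ (k+1))/2 = -(π/(4*N)) := by
        simp only [hθdef]; push_cast; field_simp; ring
      rw [he1, he2, Real.sin_neg] at hcc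
      have hmono : Real.sin (θ k) ≤ Real.sin (θ k + π/(4*N)) := by
        apply Real.sin_le_sin_of_le_of_le_pi_div_two
        · linarith [hθpos k hk]
        · simp only [hθdef]
          rw [div_add_div _ _ (by positivity) (by positivity)]
          rw [div_le_div_iff₀ (by positivity) (by norm_num)]
          simp only [hNdef]
          nlinarith [mul_nonneg (mul_nonneg (sub_nonneg.mpr hkn) hπ.le) (by linarith : (0:ℝ) ≤ (n:ℝ)+1)]
        · have : (0:ℝ) < π/(4*N) := by positivity
          linarith
      have hcc' : Real.cos (θ k) - Real.cos (θ (k+1))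
          = 2 * Real.sin (π/(4*N)) * Real.sin (θ k + π/(4*N)) := by rw [hcc]; ring
      have hmul := mul_le_mul_of_nonneg_left hmono
        (by positivity : (0:ℝ) ≤ 2 * Real.sin (π/(4*N)))
      rw [hcc']
      linarith
    have hsum := Finset.sum_le_sum hstep
    have htele := telescope_aux (fun k => Real.cos (θ k)) n (by omega)
    rw [htele] at hsum
    beta_reduce at hsum
    have hθn1 : θ (n+1) = π/2 := by
      simp only [hθdef, hNdef]; push_cast; field_simp
    have hcos1 : Real.cos (θ 1) ≤ 1 := Real.cos_le_one _
    rw [hθn1, Real.cos_pi_div_two] at hsum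
    rw [← Finset.mul_sum] at hsum
    rw [hTdef]
    linarith
  have hsin4 : 3/(4*N) ≤ Real.sin (π/(4*N)) := by
    have hx0 : (0:ℝ) < π/(4*N) := by positivity
    have hx1 : π/(4*N) ≤ 1 := by
      rw [div_le_one (by positivity)]
      nlinarith
    have h : π/(4*N) - (π/(4*N))^3/4 < Real.sin (π/(4*N)) := by
      have := Real.sin_gt_sub_cube hx0
      nlinarith [pow_pos hx0 3]
    have hπsq : π^2 < 10 := by nlinarith
    have hπ3 : π^3 < 32 := by nlinarith [mul_lt_mul_of_pos_left hπ2 (by positivity : (0:ℝ) < π^2)]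
    have hN2 : (9:ℝ) ≤ N^2 := by nlinarith
    have hcube : 3/(4*N) ≤ π/(4*N) - (π/(4*N))^3/4 := by
      have he : π/(4*N) - (π/(4*N))^3/4 - 3/(4*N) = ((π-3)*64*N^2 - π^3)/(256*N^3) := by
        field_simp
        ring
      have hnum : 0 ≤ (π-3)*64*N^2 - π^3 := by
        nlinarith [mul_nonneg (by linarith : (0:ℝ) ≤ π - 3) (by linarith : (0:ℝ) ≤ N^2 - 9)]
      have hq : 0 ≤ ((π-3)*64*N^2 - π^3)/(256*N^3) := div_nonneg hnum (by positivity)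
      rw [← he] at hq
      linarith
    linarith
  have hT : T ≤ 2*N/3 := by
    have ha : (3/(4*N))*T ≤ 1/2 := by
      nlinarith [mul_le_mul_of_nonneg_right hsin4 hTnonneg, htel]
    have hb := mul_le_mul_of_nonneg_left ha hN0.le
    have hc : N*((3/(4*N))*T) = 3/4*T := by field_simp
    rw [hc] at hb
    linarith
  -- lower bound on S
  have hlb : (2*N/π) * Real.log n - 2*N/3 ≤ S := by
    have h1 : ∑ k ∈ Finset.Icc 1 n, (2*N/(π*(k:ℝ)) - Real.sin (θ k)) ≤ S := by
      rw [hSsplit]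
      apply Finset.sum_le_sum
      intro k hk
      linarith [hlow1 k hk]
    have h2 : ∑ k ∈ Finset.Icc 1 n, (2*N/(π*(k:ℝ)) - Real.sin (θ k))
        = (2*N/π) * H - T := by
      rw [Finset.sum_sub_distrib, hTdef, hHdef, Finset.mul_sum]
      congr 1
      apply Finset.sum_congr rfl
      intro k hk
      rw [mul_one_div]
      rw [div_div]
    have h3 : Real.log n ≤ H := harm_ge_log n (by omega)
    have h4 : (2*N/π) * Real.log n ≤ (2*N/π) * H :=
      mul_le_mul_of_nonneg_left h3 (by positivity)
    linarith [h2.ge.trans h1]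
  -- combine with harmonic bounds
  have hH := harm_le_log n hn
  have hlog2 := Real.log_two_gt_d9
  have hSub : S ≤ N * Real.log n + N/2 := by
    have h1 : N * H ≤ N * (Real.log n + 3/2 - Real.log 2) :=
      mul_le_mul_of_nonneg_left hH hN0.le
    have hnN : (n:ℝ) = N - 1 := by simp only [hNdef]; ring
    nlinarith [hub]
  -- final assembly
  have hnpos : (0:ℝ) < (n:ℝ) := by linarith
  have hJ2 : 0 ≤ J^2/(4*N) := by positivity
  constructor
  · rw [Real.rpow_def_of_pos hnpos, ← Real.exp_add, Real.exp_le_exp]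
    have h := mul_le_mul_of_nonneg_left hlb hJ2
    have heq : J^2/(4*N) * ((2*N/π) * Real.log n - 2*N/3)
        = Real.log n * (J^2/(2*π)) + (-J^2/6) := by
      field_simp
      ring
    rw [heq] at h
    exact h
  · rw [Real.rpow_def_of_pos hnpos, ← Real.exp_add, Real.exp_le_exp]
    have h := mul_le_mul_of_nonneg_left hSub hJ2
    have heq : J^2/(4*N) * (N * Real.log n + N/2)
        = Real.log n * (J^2/4) + J^2/8 := by
      field_simp
      ring
    rw [heq] at h
    exact h
end

section
/- For every positive integer n and every integer r with 1 ≤ r ≤ n, the sum ∑_{k=1}^{n} g_k^{r2} with g_k^r = sin(krπ/(n+1)) / sqrt((n+1) · 2 sin(kπ/(2(n+1)))) satisfies ∑_{k=1}^{n} (g_k^r)² ≤ (1/2)(1 + ln n). -/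
open Real Finset

/-- `∑_{k=1}^{n} (g_k^r)² ≤ (1/2)(1 + ln n)` where
`g_k^r = sin(krπ/(n+1)) / √(2(n+1) sin(kπ/(2(n+1))))`. -/
theorem coupling_sum_bound (n r : ℕ) (hn : 1 ≤ n) (hr1 : 1 ≤ r) (hrn : r ≤ n) :
    ∑ k ∈ Finset.Icc 1 n,
        Real.sin (k * r * Real.pi / (n + 1)) ^ 2 /
          (2 * ((n : ℝ) + 1) * Real.sin (k * Real.pi / (2 * (n + 1)))) ≤
      (1 / 2) * (1 + Real.log n) := by
  have key : ∑ k ∈ Finset.Icc 1 n,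
      Real.sin (k * r * Real.pi / (n + 1)) ^ 2 /
        (2 * ((n : ℝ) + 1) * Real.sin (k * Real.pi / (2 * (n + 1)))) ≤
      ∑ k ∈ Finset.Icc 1 n, 1 / (2 * (k : ℝ)) := by
    apply Finset.sum_le_sum
    intro k hk
    simp only [Finset.mem_Icc] at hk
    obtain ⟨hk1, hkn⟩ := hk
    have hk1' : (1 : ℝ) ≤ k := by exact_mod_cast hk1
    have hkn' : (k : ℝ) ≤ n := by exact_mod_cast hkn
    have hn1 : (0 : ℝ) < (n : ℝ) + 1 := by positivity
    set x := (k : ℝ) * Real.pi / (2 * ((n : ℝ) + 1)) with hx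
    have hx0 : 0 ≤ x := by positivity
    have hxpi : x ≤ Real.pi / 2 := by
      rw [hx, div_le_div_iff₀ (by positivity) (by norm_num)]
      have : (k : ℝ) * Real.pi * 2 ≤ ((n : ℝ) + 1) * Real.pi * 2 := by
        nlinarith [Real.pi_pos]
      linarith
    have hsin : (k : ℝ) / ((n : ℝ) + 1) ≤ Real.sin x := by
      have := Real.mul_le_sin hx0 hxpi
      have h2 : 2 / Real.pi * x = (k : ℝ) / ((n : ℝ) + 1) := by
        rw [hx]; field_simp
      linarith [h2 ▸ this]
    have hden : 2 * (k : ℝ) ≤ 2 * ((n : ℝ) + 1) * Real.sin x := by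
      have : 2 * ((n : ℝ) + 1) * ((k : ℝ) / ((n : ℝ) + 1)) = 2 * k := by
        field_simp
      nlinarith
    have hdenpos : 0 < 2 * ((n : ℝ) + 1) * Real.sin x := by
      have : (0 : ℝ) < 2 * k := by positivity
      linarith
    have hnum : Real.sin ((k : ℝ) * r * Real.pi / ((n : ℝ) + 1)) ^ 2 ≤ 1 := by
      have := Real.neg_one_le_sin ((k : ℝ) * r * Real.pi / ((n : ℝ) + 1))
      have := Real.sin_le_one ((k : ℝ) * r * Real.pi / ((n : ℝ) + 1))
      nlinarith
    calc Real.sin ((k : ℝ) * r * Real.pi / ((n : ℝ) + 1)) ^ 2 /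
          (2 * ((n : ℝ) + 1) * Real.sin x)
        ≤ 1 / (2 * ((n : ℝ) + 1) * Real.sin x) := by
          gcongr
      _ ≤ 1 / (2 * (k : ℝ)) := by
          apply one_div_le_one_div_of_le (by positivity) hden
  refine key.trans ?_
  have hharm : ∑ k ∈ Finset.Icc 1 n, 1 / (2 * (k : ℝ)) = (1 / 2) * (harmonic n : ℝ) := by
    rw [harmonic_eq_sum_Icc]
    push_cast
    rw [Finset.mul_sum]
    apply Finset.sum_congr rfl
    intro k _
    field_simp
  rw [hharm]
  have := harmonic_le_one_add_log n
  nlinarith [this]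
end

section
/- Let H be a real number (the eigenvalue shift bound): if λ : [0,1] → ℝ is differentiable and satisfies −v(1 + λ(ε)) ≤ (1 − vε) λ'(ε) and (1 + vε) λ'(ε) ≤ v(1 + λ(ε)) for all ε ∈ [0,1], where 0 ≤ v < 1 and 1 + λ(0) ≥ 0, then |λ(1) − λ(0)| ≤ v(1 + λ(0)). -/
open Set

/-- Eigenvalue shift under perturbation: if `λ` is differentiable on `[0,1]` with
`−v(1+λ(ε)) ≤ (1−vε)λ'(ε)` and `(1+vε)λ'(ε) ≤ v(1+λ(ε))` for `0 ≤ v < 1`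
and `1 + λ(0) ≥ 0`, then `|λ(1) − λ(0)| ≤ v(1 + λ(0))`. -/
theorem eigenvalue_shift (v : ℝ) (hv0 : 0 ≤ v) (hv1 : v < 1)
    (lam lam' : ℝ → ℝ)
    (hderiv : ∀ ε ∈ Set.Icc (0 : ℝ) 1, HasDerivAt lam (lam' ε) ε)
    (h0 : 0 ≤ 1 + lam 0)
    (hlow : ∀ ε ∈ Set.Icc (0 : ℝ) 1, -v * (1 + lam ε) ≤ (1 - v * ε) * lam' ε)
    (hup : ∀ ε ∈ Set.Icc (0 : ℝ) 1, (1 + v * ε) * lam' ε ≤ v * (1 + lam ε)) :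
    |lam 1 - lam 0| ≤ v * (1 + lam 0) := by
  have hconv : Convex ℝ (Icc (0:ℝ) 1) := convex_Icc 0 1
  have hplus : ∀ ε ∈ Icc (0:ℝ) 1, (0:ℝ) < 1 + v * ε := by
    intro ε hε; nlinarith [hε.1, hε.2]
  have hminus : ∀ ε ∈ Icc (0:ℝ) 1, (0:ℝ) < 1 - v * ε := by
    intro ε hε; nlinarith [hε.1, hε.2]
  set g : ℝ → ℝ := fun ε => (1 + lam ε) / (1 + v * ε) with hgdef
  set k : ℝ → ℝ := fun ε => (1 + lam ε) / (1 - v * ε) with hkdef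
  have hg : ∀ ε ∈ Icc (0:ℝ) 1, HasDerivAt g
      ((lam' ε * (1 + v * ε) - (1 + lam ε) * v) / (1 + v * ε) ^ 2) ε := by
    intro ε hε
    have h1 : HasDerivAt (fun x => 1 + lam x) (lam' ε) ε := (hderiv ε hε).const_add 1
    have h2 : HasDerivAt (fun x : ℝ => 1 + v * x) v ε := by
      simpa using ((hasDerivAt_id ε).const_mul v).const_add 1
    exact h1.div h2 (hplus ε hε).ne'
  have hk : ∀ ε ∈ Icc (0:ℝ) 1, HasDerivAt k
      ((lam' ε * (1 - v * ε) - (1 + lam ε) * (-v)) / (1 - v * ε) ^ 2) ε := by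
    intro ε hε
    have h1 : HasDerivAt (fun x => 1 + lam x) (lam' ε) ε := (hderiv ε hε).const_add 1
    have h2 : HasDerivAt (fun x : ℝ => 1 - v * x) (-v) ε := by
      simpa using (((hasDerivAt_id ε).const_mul v).const_sub 1)
    exact h1.div h2 (hminus ε hε).ne'
  have hganti : AntitoneOn g (Icc 0 1) := by
    apply antitoneOn_of_deriv_nonpos hconv
    · exact fun ε hε => (hg ε hε).continuousAt.continuousWithinAt
    · intro ε hε
      rw [interior_Icc] at hε
      exact (hg ε (Ioo_subset_Icc_self hε)).differentiableAt.differentiableWithinAt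
    · intro ε hε
      rw [interior_Icc] at hε
      have hε' := Ioo_subset_Icc_self hε
      rw [(hg ε hε').deriv]
      apply div_nonpos_of_nonpos_of_nonneg
      · nlinarith [hup ε hε']
      · positivity
  have hkmono : MonotoneOn k (Icc 0 1) := by
    apply monotoneOn_of_deriv_nonneg hconv
    · exact fun ε hε => (hk ε hε).continuousAt.continuousWithinAt
    · intro ε hε
      rw [interior_Icc] at hε
      exact (hk ε (Ioo_subset_Icc_self hε)).differentiableAt.differentiableWithinAt
    · intro ε hε
      rw [interior_Icc] at hε
      have hε' := Ioo_subset_Icc_self hε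
      rw [(hk ε hε').deriv]
      apply div_nonneg
      · nlinarith [hlow ε hε']
      · positivity
  have h01 : (0:ℝ) ∈ Icc (0:ℝ) 1 := by norm_num
  have h11 : (1:ℝ) ∈ Icc (0:ℝ) 1 := by norm_num
  have hgle : g 1 ≤ g 0 := hganti h01 h11 zero_le_one
  have hkle : k 0 ≤ k 1 := hkmono h01 h11 zero_le_one
  simp only [hgdef, hkdef, mul_one, mul_zero, add_zero, sub_zero, div_one] at hgle hkle
  have hp : (0:ℝ) < 1 + v := by linarith
  have hm : (0:ℝ) < 1 - v := by linarith
  rw [div_le_iff₀ hp] at hgle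
  rw [le_div_iff₀ hm] at hkle
  rw [abs_le]
  constructor <;> nlinarith
end

section
/- For every integer n ≥ 2 and J ∈ [0,1], the quantity ∑_{k=1}^{n} |g_k¹|²/ω_k² with g_k¹ = sin(kπ/(n+1))/sqrt(2(n+1) sin(kπ/(2(n+1)))) and ω_k = 2 sin(kπ/(2(n+1))) satisfies (1/π) ln n − 1/3 ≤ ∑_{k=1}^{n} |g_k¹|²/ω_k² ≤ (1/2) ln n + 1/4. -/
open Real Finset

private lemma step_sin_le {a b : ℝ} (ha : 0 ≤ a) (hab : a ≤ b) (hb : b ≤ π / 2) :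
    (b - a) * Real.sin a ≤ Real.cos a - Real.cos b := by
  rw [← integral_sin]
  rw [show (b - a) * Real.sin a = ∫ _ in a..b, Real.sin a by
    rw [intervalIntegral.integral_const, smul_eq_mul]]
  refine intervalIntegral.integral_mono_on hab intervalIntegrable_const
    (Real.continuous_sin.intervalIntegrable a b) (fun x hx => ?_)
  exact Real.sin_le_sin_of_le_of_le_pi_div_two (by linarith [Real.pi_pos])
    (le_trans hx.2 hb) hx.1

private lemma term_eq (n k : ℕ) (hk1 : 1 ≤ k) (hk2 : k ≤ n) :
    (Real.sin (k * Real.pi / (n + 1)) ^ 2 /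
        (2 * ((n : ℝ) + 1) * Real.sin (k * Real.pi / (2 * (n + 1))))) /
      (2 * Real.sin (k * Real.pi / (2 * (n + 1)))) ^ 2
    = Real.cos ((k : ℝ) * π / (2 * ((n : ℝ) + 1))) ^ 2 /
        (2 * ((n : ℝ) + 1) * Real.sin ((k : ℝ) * π / (2 * ((n : ℝ) + 1)))) := by
  have hπ := Real.pi_pos
  have hN : (0 : ℝ) < (n : ℝ) + 1 := by positivity
  have hk1' : (1 : ℝ) ≤ (k : ℝ) := by exact_mod_cast hk1
  have hkn : (k : ℝ) < (n : ℝ) + 1 := by exact_mod_cast Nat.lt_succ_of_le hk2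
  set θ : ℝ := (k : ℝ) * π / (2 * ((n : ℝ) + 1)) with hθ
  have hθ0 : 0 < θ := by positivity
  have hθ1 : θ < π / 2 := by
    rw [hθ, div_lt_iff₀ (by positivity)]
    nlinarith
  have hs : 0 < Real.sin θ := Real.sin_pos_of_pos_of_lt_pi hθ0 (by linarith)
  have hdb : (k : ℝ) * Real.pi / ((n : ℝ) + 1) = 2 * θ := by
    rw [hθ]; field_simp
  rw [hdb, Real.sin_two_mul]
  field_simp

private lemma term_facts (n k : ℕ) (hk1 : 1 ≤ k) (hk2 : k ≤ n) :
    Real.cos ((k : ℝ) * π / (2 * ((n : ℝ) + 1))) ^ 2 /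
        (2 * ((n : ℝ) + 1) * Real.sin ((k : ℝ) * π / (2 * ((n : ℝ) + 1)))) ≤
      1 / ((k : ℝ) * π) ∧
    1 / ((k : ℝ) * π) - Real.sin ((k : ℝ) * π / (2 * ((n : ℝ) + 1))) / (2 * ((n : ℝ) + 1)) ≤
      Real.cos ((k : ℝ) * π / (2 * ((n : ℝ) + 1))) ^ 2 /
        (2 * ((n : ℝ) + 1) * Real.sin ((k : ℝ) * π / (2 * ((n : ℝ) + 1)))) := by
  have hπ := Real.pi_pos
  have hN : (0 : ℝ) < (n : ℝ) + 1 := by positivity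
  have hk1' : (1 : ℝ) ≤ (k : ℝ) := by exact_mod_cast hk1
  have hkn : (k : ℝ) < (n : ℝ) + 1 := by exact_mod_cast Nat.lt_succ_of_le hk2
  set θ : ℝ := (k : ℝ) * π / (2 * ((n : ℝ) + 1)) with hθ
  have hθ0 : 0 < θ := by positivity
  have hθ1 : θ < π / 2 := by
    rw [hθ, div_lt_iff₀ (by positivity)]
    nlinarith
  have hs : 0 < Real.sin θ := Real.sin_pos_of_pos_of_lt_pi hθ0 (by linarith)
  have hc : 0 < Real.cos θ := Real.cos_pos_of_mem_Ioo ⟨by linarith, hθ1⟩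
  have hkθ : (k : ℝ) * π = 2 * ((n : ℝ) + 1) * θ := by
    rw [hθ]; field_simp
  have htan : θ * Real.cos θ < Real.sin θ := by
    have h := Real.lt_tan hθ0 hθ1
    rw [Real.tan_eq_sin_div_cos] at h
    exact (lt_div_iff₀ hc).mp h
  have hsθ : Real.sin θ ≤ θ := Real.sin_le hθ0.le
  constructor
  · rw [div_le_div_iff₀ (by positivity) (by positivity), hkθ]
    nlinarith [Real.cos_le_one θ, mul_nonneg (mul_nonneg hθ0.le hc.le)
      (sub_nonneg.mpr (Real.cos_le_one θ)), mul_pos hN (sub_pos.mpr htan)]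
  · have h1 : 1 / ((k : ℝ) * π) ≤ 1 / (2 * ((n : ℝ) + 1) * Real.sin θ) := by
      apply one_div_le_one_div_of_le (by positivity)
      rw [hkθ]
      nlinarith
    have h2 : Real.cos θ ^ 2 / (2 * ((n : ℝ) + 1) * Real.sin θ)
        = 1 / (2 * ((n : ℝ) + 1) * Real.sin θ) - Real.sin θ / (2 * ((n : ℝ) + 1)) := by
      rw [Real.cos_sq']
      field_simp
    rw [h2]
    linarith

private lemma sin_sum_le (n : ℕ) :
    ∑ k ∈ Finset.Icc 1 n, Real.sin ((k : ℝ) * π / (2 * ((n : ℝ) + 1))) ≤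
      2 * ((n : ℝ) + 1) / π := by
  have hπ := Real.pi_pos
  have hN : (0 : ℝ) < (n : ℝ) + 1 := by positivity
  have hx : (0 : ℝ) < π / (2 * ((n : ℝ) + 1)) := by positivity
  have key : ∀ k ∈ Finset.Icc 1 n,
      (π / (2 * ((n : ℝ) + 1))) * Real.sin ((k : ℝ) * π / (2 * ((n : ℝ) + 1))) ≤
        Real.cos ((k : ℝ) * π / (2 * ((n : ℝ) + 1))) -
          Real.cos (((k : ℝ) + 1) * π / (2 * ((n : ℝ) + 1))) := by
    intro k hk
    obtain ⟨hk1, hk2⟩ := Finset.mem_Icc.mp hk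
    have hk1' : (1 : ℝ) ≤ (k : ℝ) := by exact_mod_cast hk1
    have hkn : (k : ℝ) ≤ (n : ℝ) := by exact_mod_cast hk2
    have hdiff : ((k : ℝ) + 1) * π / (2 * ((n : ℝ) + 1)) -
        (k : ℝ) * π / (2 * ((n : ℝ) + 1)) = π / (2 * ((n : ℝ) + 1)) := by ring
    have hb : ((k : ℝ) + 1) * π / (2 * ((n : ℝ) + 1)) ≤ π / 2 := by
      rw [div_le_iff₀ (by positivity)]
      nlinarith
    have := step_sin_le (a := (k : ℝ) * π / (2 * ((n : ℝ) + 1)))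
      (b := ((k : ℝ) + 1) * π / (2 * ((n : ℝ) + 1))) (by positivity)
      (by rw [div_le_div_iff₀ (by positivity) (by positivity)]; nlinarith) hb
    rw [hdiff] at this
    exact this
  have hsum := Finset.sum_le_sum key
  rw [← Finset.mul_sum] at hsum
  have htel : ∑ k ∈ Finset.Icc 1 n,
      (Real.cos ((k : ℝ) * π / (2 * ((n : ℝ) + 1))) -
        Real.cos (((k : ℝ) + 1) * π / (2 * ((n : ℝ) + 1))))
      = Real.cos (π / (2 * ((n : ℝ) + 1))) -
          Real.cos (((n : ℝ) + 1) * π / (2 * ((n : ℝ) + 1))) := by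
    rw [← Finset.Ico_add_one_right_eq_Icc, Finset.sum_Ico_eq_sum_range]
    simp only [Nat.add_sub_cancel_left, Nat.succ_sub_one, Nat.add_sub_cancel]
    have : ∀ i : ℕ, Real.cos (((1 + i : ℕ) : ℝ) * π / (2 * ((n : ℝ) + 1))) -
        Real.cos ((((1 + i : ℕ) : ℝ) + 1) * π / (2 * ((n : ℝ) + 1)))
        = (fun j : ℕ => Real.cos (((j : ℝ) + 1) * π / (2 * ((n : ℝ) + 1)))) i -
          (fun j : ℕ => Real.cos (((j : ℝ) + 1) * π / (2 * ((n : ℝ) + 1)))) (i + 1) := by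
      intro i; push_cast; ring_nf
    calc ∑ i ∈ Finset.range n,
          (Real.cos (((1 + i : ℕ) : ℝ) * π / (2 * ((n : ℝ) + 1))) -
            Real.cos ((((1 + i : ℕ) : ℝ) + 1) * π / (2 * ((n : ℝ) + 1))))
        = ∑ i ∈ Finset.range n,
          ((fun j : ℕ => Real.cos (((j : ℝ) + 1) * π / (2 * ((n : ℝ) + 1)))) i -
            (fun j : ℕ => Real.cos (((j : ℝ) + 1) * π / (2 * ((n : ℝ) + 1)))) (i + 1)) :=
          Finset.sum_congr rfl (fun i _ => this i)
      _ = _ := by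
          rw [Finset.sum_range_sub' (fun j : ℕ =>
            Real.cos (((j : ℝ) + 1) * π / (2 * ((n : ℝ) + 1)))) n]
          push_cast
          ring_nf
  rw [htel] at hsum
  have hhalf : ((n : ℝ) + 1) * π / (2 * ((n : ℝ) + 1)) = π / 2 := by
    field_simp
  rw [hhalf, Real.cos_pi_div_two, sub_zero] at hsum
  have hc1 : Real.cos (π / (2 * ((n : ℝ) + 1))) ≤ 1 := Real.cos_le_one _
  calc ∑ k ∈ Finset.Icc 1 n, Real.sin ((k : ℝ) * π / (2 * ((n : ℝ) + 1)))
      ≤ Real.cos (π / (2 * ((n : ℝ) + 1))) / (π / (2 * ((n : ℝ) + 1))) := by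
        rw [le_div_iff₀ hx]
        linarith [hsum]
    _ ≤ 1 / (π / (2 * ((n : ℝ) + 1))) := by gcongr
    _ = 2 * ((n : ℝ) + 1) / π := by rw [one_div_div]

/-- Bounds on the overlap sum of the transmission line:
`(1/π) ln n − 1/3 ≤ ∑_{k=1}^{n} |g_k¹|²/ω_k² ≤ (1/2) ln n + 1/4`, where
`g_k¹ = sin(kπ/(n+1))/√(2(n+1) sin(kπ/(2(n+1))))` and `ω_k = 2 sin(kπ/(2(n+1)))`. -/
theorem overlap_sum_bounds (n : ℕ) (hn : 2 ≤ n) :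
    (1 / Real.pi) * Real.log n - 1 / 3 ≤
      (∑ k ∈ Finset.Icc 1 n,
        (Real.sin (k * Real.pi / (n + 1)) ^ 2 /
            (2 * ((n : ℝ) + 1) * Real.sin (k * Real.pi / (2 * (n + 1))))) /
          (2 * Real.sin (k * Real.pi / (2 * (n + 1)))) ^ 2) ∧
    (∑ k ∈ Finset.Icc 1 n,
        (Real.sin (k * Real.pi / (n + 1)) ^ 2 /
            (2 * ((n : ℝ) + 1) * Real.sin (k * Real.pi / (2 * (n + 1))))) /
          (2 * Real.sin (k * Real.pi / (2 * (n + 1)))) ^ 2) ≤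
      (1 / 2) * Real.log n + 1 / 4 := by
  have hπ := Real.pi_pos
  have hN : (0 : ℝ) < (n : ℝ) + 1 := by positivity
  have hn1 : (1 : ℝ) ≤ (n : ℝ) := by
    have : (2 : ℝ) ≤ (n : ℝ) := by exact_mod_cast hn
    linarith
  -- rewrite summand
  have hrw : (∑ k ∈ Finset.Icc 1 n,
        (Real.sin (k * Real.pi / (n + 1)) ^ 2 /
            (2 * ((n : ℝ) + 1) * Real.sin (k * Real.pi / (2 * (n + 1))))) /
          (2 * Real.sin (k * Real.pi / (2 * (n + 1)))) ^ 2)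
      = ∑ k ∈ Finset.Icc 1 n,
          Real.cos ((k : ℝ) * π / (2 * ((n : ℝ) + 1))) ^ 2 /
            (2 * ((n : ℝ) + 1) * Real.sin ((k : ℝ) * π / (2 * ((n : ℝ) + 1)))) := by
    refine Finset.sum_congr rfl (fun k hk => ?_)
    obtain ⟨hk1, hk2⟩ := Finset.mem_Icc.mp hk
    exact term_eq n k hk1 hk2
  rw [hrw]
  -- harmonic sum facts
  have hHcast : ((harmonic n : ℚ) : ℝ) = ∑ k ∈ Finset.Icc 1 n, ((k : ℝ))⁻¹ := by
    simp only [harmonic_eq_sum_Icc, Rat.cast_sum, Rat.cast_inv, Rat.cast_natCast]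
  have hH1 : Real.log ((n : ℝ) + 1) ≤ ∑ k ∈ Finset.Icc 1 n, ((k : ℝ))⁻¹ := by
    have := log_add_one_le_harmonic n
    rw [hHcast] at this
    exact_mod_cast this
  have hH2 : ∑ k ∈ Finset.Icc 1 n, ((k : ℝ))⁻¹ ≤ 1 + Real.log n := by
    have := harmonic_le_one_add_log n
    rw [hHcast] at this
    exact this
  have hinv : ∑ k ∈ Finset.Icc 1 n, 1 / ((k : ℝ) * π)
      = (∑ k ∈ Finset.Icc 1 n, ((k : ℝ))⁻¹) / π := by
    rw [Finset.sum_div]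
    refine Finset.sum_congr rfl (fun k hk => ?_)
    obtain ⟨hk1, _⟩ := Finset.mem_Icc.mp hk
    have hk0 : (k : ℝ) ≠ 0 := by positivity
    field_simp
  have hlogn0 : 0 ≤ Real.log n := Real.log_nonneg hn1
  constructor
  · -- lower bound
    have hlow : ∑ k ∈ Finset.Icc 1 n,
        (1 / ((k : ℝ) * π) - Real.sin ((k : ℝ) * π / (2 * ((n : ℝ) + 1))) / (2 * ((n : ℝ) + 1)))
        ≤ ∑ k ∈ Finset.Icc 1 n,
          Real.cos ((k : ℝ) * π / (2 * ((n : ℝ) + 1))) ^ 2 /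
            (2 * ((n : ℝ) + 1) * Real.sin ((k : ℝ) * π / (2 * ((n : ℝ) + 1)))) := by
      refine Finset.sum_le_sum (fun k hk => ?_)
      obtain ⟨hk1, hk2⟩ := Finset.mem_Icc.mp hk
      exact (term_facts n k hk1 hk2).2
    rw [Finset.sum_sub_distrib, hinv, ← Finset.sum_div] at hlow
    have hsin := sin_sum_le n
    have hsin' : (∑ k ∈ Finset.Icc 1 n, Real.sin ((k : ℝ) * π / (2 * ((n : ℝ) + 1))))
        / (2 * ((n : ℝ) + 1)) ≤ 1 / π := by
      rw [div_le_div_iff₀ (by positivity) hπ]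
      calc (∑ k ∈ Finset.Icc 1 n, Real.sin ((k : ℝ) * π / (2 * ((n : ℝ) + 1)))) * π
          ≤ (2 * ((n : ℝ) + 1) / π) * π := by gcongr
        _ = 1 * (2 * ((n : ℝ) + 1)) := by field_simp
    have hlogmono : Real.log n ≤ Real.log ((n : ℝ) + 1) :=
      Real.log_le_log (by positivity) (by linarith)
    have hπ3 : (3 : ℝ) < π := Real.pi_gt_three
    have h13 : 1 / π ≤ 1 / 3 := by
      apply one_div_le_one_div_of_le (by norm_num) hπ3.le
    have hHdiv : Real.log n / π ≤ (∑ k ∈ Finset.Icc 1 n, ((k : ℝ))⁻¹) / π := by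
      gcongr
      linarith
    calc (1 / Real.pi) * Real.log n - 1 / 3
        = Real.log n / π - 1 / 3 := by ring
      _ ≤ (∑ k ∈ Finset.Icc 1 n, ((k : ℝ))⁻¹) / π - 1 / π := by linarith
      _ ≤ _ := by linarith
  · -- upper bound
    have hup : ∑ k ∈ Finset.Icc 1 n,
          Real.cos ((k : ℝ) * π / (2 * ((n : ℝ) + 1))) ^ 2 /
            (2 * ((n : ℝ) + 1) * Real.sin ((k : ℝ) * π / (2 * ((n : ℝ) + 1))))
        ≤ ∑ k ∈ Finset.Icc 1 n, 1 / ((k : ℝ) * π) := by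
      refine Finset.sum_le_sum (fun k hk => ?_)
      obtain ⟨hk1, hk2⟩ := Finset.mem_Icc.mp hk
      exact (term_facts n k hk1 hk2).1
    rw [hinv] at hup
    have hlog2 : Real.log 2 ≤ Real.log n :=
      Real.log_le_log (by norm_num) (by exact_mod_cast hn)
    have hlog2' : (0.6931471803 : ℝ) < Real.log 2 := Real.log_two_gt_d9
    have hπ4 : (3.14 : ℝ) < π := by
      have := Real.pi_gt_three
      nlinarith [Real.pi_gt_d6]
    have hfin : (1 + Real.log n) / π ≤ (1 / 2) * Real.log n + 1 / 4 := by
      rw [div_le_iff₀ hπ]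
      nlinarith [mul_nonneg (show (0:ℝ) ≤ (1/2) * Real.log n + 1/4 by linarith)
        (show (0:ℝ) ≤ π - 3.14 by linarith)]
    have : (∑ k ∈ Finset.Icc 1 n, ((k : ℝ))⁻¹) / π ≤ (1 + Real.log n) / π := by gcongr
    linarith
end
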